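/- arXiv:2505.03291 — 2 statements merged into one kernel-verified Lean document; each statement's English description precedes it below -/
import Mathlib

section
/- Let (F_1, F_2) be a Nash equilibrium of the single-item all-pay auction with parameters (B_1, B_2, v_1, v_2), and suppose that for some player i, inf Supp(F_i) < sup Supp(F_i) while inf Supp(F_{3−i}) = sup Supp(F_{3−i}). Then Supp(F_i) = {0, L}, the probability that player i bids 0 satisfies F_i({0}) ≤ 1 − 2L/v_{3−i}, player i's expected equilibrium utility is 0, and player (3−i)'s expected equilibrium utility is at most v_{3−i} − 2L. -/
open MeasureTheory Set

noncomputable section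

/-- `L = min {B₁, B₂, v₁, v₂}` for the single-item auction. -/
def Lval (B v : Fin 2 → ℝ) : ℝ := min (min (B 0) (B 1)) (min (v 0) (v 1))

/-- Probability that player `i` wins the single item when bidding `xi` while the
opponent bids `xo`: the strictly higher bid wins; on a tie at
`min {B₁, B₂, v₁, v₂}` the player with the strictly larger `min {Bᵢ, vᵢ}` wins,
and all other ties are resolved by a fair coin. -/
def winProb (B v : Fin 2 → ℝ) (i : Fin 2) (xi xo : ℝ) : ℝ :=
  if xo < xi then 1
  else if xi < xo then 0
  else if xi = Lval B v ∧ min (B (1 - i)) (v (1 - i)) < min (B i) (v i) then 1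
  else if xi = Lval B v ∧ min (B i) (v i) < min (B (1 - i)) (v (1 - i)) then 0
  else 1 / 2

/-- Expected utility of player `i` from the pure bids `xi` (own) and `xo` (opponent):
he pays his bid in any case and receives `v i` with his winning probability. -/
def payoff (B v : Fin 2 → ℝ) (i : Fin 2) (xi xo : ℝ) : ℝ :=
  winProb B v i xi xo * v i - xi

/-- A mixed strategy of a player with budget `Bi`: a probability measure on `[0, Bi]`. -/
def IsStrategy (Bi : ℝ) (μ : Measure ℝ) : Prop :=
  IsProbabilityMeasure μ ∧ μ (Icc 0 Bi) = 1

/-- Expected utility of player `i` when he plays `μ` and the opponent plays `ν`. -/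
def expUtil (B v : Fin 2 → ℝ) (i : Fin 2) (μ ν : Measure ℝ) : ℝ :=
  ∫ xi, (∫ xo, payoff B v i xi xo ∂ν) ∂μ

/-- `(F 0, F 1)` is a (mixed) Nash equilibrium of the single-item all-pay auction. -/
def IsNash (B v : Fin 2 → ℝ) (F : Fin 2 → Measure ℝ) : Prop :=
  (∀ i, IsStrategy (B i) (F i)) ∧
  ∀ i, ∀ μ, IsStrategy (B i) μ →
    expUtil B v i μ (F (1 - i)) ≤ expUtil B v i (F i) (F (1 - i))

/-- The (topological) support of a mixed strategy. -/
def supp (μ : Measure ℝ) : Set ℝ := {x | ∀ U ∈ nhds x, μ U ≠ 0}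

/- ==== auxiliary lemmas ==== -/

lemma fin2_sub_sub (j : Fin 2) : 1 - (1 - j) = j := by fin_cases j <;> rfl

lemma Lval_eq (B v : Fin 2 → ℝ) (i : Fin 2) :
    Lval B v = min (min (B i) (v i)) (min (B (1 - i)) (v (1 - i))) := by
  fin_cases i
  · simpa [Lval] using min_min_min_comm (B 0) (B 1) (v 0) (v 1)
  · simp only [Lval]
    rw [min_min_min_comm]
    exact min_comm _ _

lemma isClosed_supp (μ : Measure ℝ) : IsClosed (supp μ) := by
  rw [← isOpen_compl_iff, isOpen_iff_mem_nhds]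
  intro x hx
  simp only [mem_compl_iff, supp, mem_setOf_eq, not_forall] at hx
  obtain ⟨U, hU, hU0⟩ := hx
  push_neg at hU0
  obtain ⟨V, hVU, hVo, hxV⟩ := mem_nhds_iff.1 hU
  filter_upwards [hVo.mem_nhds hxV] with y hy
  intro hysupp
  exact hysupp V (hVo.mem_nhds hy) (measure_mono_null hVU hU0)

lemma measure_compl_supp (μ : Measure ℝ) : μ (supp μ)ᶜ = 0 := by
  apply measure_null_of_locally_null
  intro x hx
  simp only [mem_compl_iff, supp, mem_setOf_eq, not_forall] at hx
  obtain ⟨U, hU, hU0⟩ := hx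
  push_neg at hU0
  exact ⟨U, nhdsWithin_le_nhds hU, hU0⟩

lemma supp_subset_of_closed (μ : Measure ℝ) {C : Set ℝ} (hC : IsClosed C) (h0 : μ Cᶜ = 0) :
    supp μ ⊆ C := by
  intro x hx
  by_contra hxC
  exact hx Cᶜ (hC.isOpen_compl.mem_nhds hxC) h0

lemma supp_nonempty (μ : Measure ℝ) [IsProbabilityMeasure μ] : (supp μ).Nonempty := by
  by_contra h
  rw [not_nonempty_iff_eq_empty] at h
  have h2 := measure_compl_supp μ
  rw [h, compl_empty] at h2
  simp at h2

lemma compl_null_of_prob {μ : Measure ℝ} [IsProbabilityMeasure μ] {s : Set ℝ}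
    (hs : MeasurableSet s) (h1 : μ s = 1) : μ sᶜ = 0 := by
  rw [measure_compl hs (measure_ne_top μ s), h1, measure_univ, tsub_self]

lemma integral_concentrated {ν : Measure ℝ} [IsProbabilityMeasure ν] {b : ℝ}
    (h : ν {b}ᶜ = 0) (g : ℝ → ℝ) : ∫ y, g y ∂ν = g b := by
  have hae : g =ᵐ[ν] fun _ => g b := by
    refine measure_mono_null (compl_subset_compl.2 ?_) h
    intro y hy
    simp only [mem_singleton_iff] at hy
    simp [hy]
  rw [integral_congr_ae hae, integral_const]
  simp

lemma integral_two_point {μ : Measure ℝ} [IsProbabilityMeasure μ] {c d : ℝ}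
    (h : μ ({c, d} : Set ℝ)ᶜ = 0) (hcd : c ≠ d) (g : ℝ → ℝ) :
    ∫ y, g y ∂μ = g d + (μ {c}).toReal * (g c - g d) := by
  have hae : g =ᵐ[μ] fun y => g d + ({c} : Set ℝ).indicator (fun _ => g c - g d) y := by
    refine measure_mono_null (compl_subset_compl.2 ?_) h
    intro y hy
    simp only [mem_insert_iff, mem_singleton_iff] at hy
    simp only [mem_setOf_eq]
    rcases hy with h1 | h1 <;> subst h1
    · simp [indicator]
    · rw [indicator_of_notMem (by simpa using (Ne.symm hcd))]; ring
  rw [integral_congr_ae hae, integral_add (integrable_const _)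
    ((integrable_const _).indicator (measurableSet_singleton c)),
    integral_const, integral_indicator_const _ (measurableSet_singleton c)]
  simp [mul_comm, Measure.real]

section payoffLemmas
variable {B v : Fin 2 → ℝ} {i : Fin 2}

lemma winProb_nonneg (x y : ℝ) : 0 ≤ winProb B v i x y := by
  unfold winProb; split_ifs <;> norm_num

lemma winProb_le_one (x y : ℝ) : winProb B v i x y ≤ 1 := by
  unfold winProb; split_ifs <;> norm_num

lemma payoff_le (hv : 0 < v i) (x y : ℝ) : payoff B v i x y ≤ v i - x := by
  unfold payoff
  nlinarith [winProb_le_one (B := B) (v := v) (i := i) x y]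

lemma neg_le_payoff (hv : 0 < v i) (x y : ℝ) : -x ≤ payoff B v i x y := by
  unfold payoff
  nlinarith [winProb_nonneg (B := B) (v := v) (i := i) x y]

lemma abs_payoff_le (hv : 0 < v i) (x y : ℝ) : |payoff B v i x y| ≤ v i + |x| := by
  rw [abs_le]
  constructor
  · have := neg_le_payoff (B := B) hv x y
    have := le_abs_self x; linarith
  · have := payoff_le (B := B) hv x y
    have := neg_abs_le x; linarith

lemma payoff_of_gt (h : y < x) : payoff B v i x y = v i - x := by
  unfold payoff winProb; rw [if_pos h]; ring

lemma payoff_of_lt (h : x < y) : payoff B v i x y = -x := by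
  unfold payoff winProb
  rw [if_neg (by linarith), if_pos h]; ring

lemma measurable_payoff_left (y : ℝ) : Measurable (fun x => payoff B v i x y) := by
  apply Measurable.sub _ measurable_id
  apply Measurable.mul_const
  unfold winProb
  have h1 : MeasurableSet {x : ℝ | y < x} := measurableSet_Ioi
  have h2 : MeasurableSet {x : ℝ | x < y} := measurableSet_Iio
  have h3 : MeasurableSet {x : ℝ | x = Lval B v ∧
      min (B (1 - i)) (v (1 - i)) < min (B i) (v i)} := by
    apply Set.Subsingleton.measurableSet
    intro a ha b hb; rw [ha.1, hb.1]
  have h4 : MeasurableSet {x : ℝ | x = Lval B v ∧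
      min (B i) (v i) < min (B (1 - i)) (v (1 - i))} := by
    apply Set.Subsingleton.measurableSet
    intro a ha b hb; rw [ha.1, hb.1]
  exact Measurable.ite h1 measurable_const <| Measurable.ite h2 measurable_const <|
    Measurable.ite h3 measurable_const <| Measurable.ite h4 measurable_const measurable_const

lemma measurable_payoff_right (x : ℝ) : Measurable (fun y => payoff B v i x y) := by
  apply Measurable.sub _ measurable_const
  apply Measurable.mul_const
  unfold winProb
  have h1 : MeasurableSet {z : ℝ | z < x} := measurableSet_Iio
  have h2 : MeasurableSet {z : ℝ | x < z} := measurableSet_Ioi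
  have h3 : MeasurableSet {_z : ℝ | x = Lval B v ∧
      min (B (1 - i)) (v (1 - i)) < min (B i) (v i)} := by
    by_cases h : x = Lval B v ∧ min (B (1 - i)) (v (1 - i)) < min (B i) (v i) <;>
      simp [h]
  have h4 : MeasurableSet {_z : ℝ | x = Lval B v ∧
      min (B i) (v i) < min (B (1 - i)) (v (1 - i))} := by
    by_cases h : x = Lval B v ∧ min (B i) (v i) < min (B (1 - i)) (v (1 - i)) <;>
      simp [h]
  exact Measurable.ite h1 measurable_const <| Measurable.ite h2 measurable_const <|
    Measurable.ite h3 measurable_const <| Measurable.ite h4 measurable_const measurable_const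

end payoffLemmas

set_option maxHeartbeats 1600000 in
/-- In a Nash equilibrium, if player `i` randomizes (the infimum of his support is
below its supremum) while the opponent `1 - i` does not, then `Supp(Fᵢ) = {0, L}`,
player `i` puts mass at most `1 - 2L/v_{3-i}` on the bid `0`, player `i`'s expected
equilibrium utility is `0`, and the opponent's expected equilibrium utility is at
most `v_{3-i} - 2L`. -/
theorem one_sided_randomization (B v : Fin 2 → ℝ) (hB : ∀ i, 0 ≤ B i)
    (hv : ∀ i, 0 < v i) (F : Fin 2 → Measure ℝ) (hN : IsNash B v F) (i : Fin 2)
    (hi : sInf (supp (F i)) < sSup (supp (F i)))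
    (ho : sInf (supp (F (1 - i))) = sSup (supp (F (1 - i)))) :
    supp (F i) = ({0, Lval B v} : Set ℝ) ∧
    (F i {0}).toReal ≤ 1 - 2 * Lval B v / v (1 - i) ∧
    expUtil B v i (F i) (F (1 - i)) = 0 ∧
    expUtil B v (1 - i) (F (1 - i)) (F i) ≤ v (1 - i) - 2 * Lval B v := by
  have hvi := hv i
  have hvo := hv (1 - i)
  have hio : 1 - (1 - i) = i := fin2_sub_sub i
  haveI hPμ : IsProbabilityMeasure (F i) := (hN.1 i).1
  haveI hPν : IsProbabilityMeasure (F (1 - i)) := (hN.1 (1 - i)).1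
  have hμIcc : F i (Icc 0 (B i)) = 1 := (hN.1 i).2
  have hνIcc : F (1 - i) (Icc 0 (B (1 - i))) = 1 := (hN.1 (1 - i)).2
  have hμIccC : F i (Icc 0 (B i))ᶜ = 0 := compl_null_of_prob measurableSet_Icc hμIcc
  have hνIccC : F (1 - i) (Icc 0 (B (1 - i)))ᶜ = 0 :=
    compl_null_of_prob measurableSet_Icc hνIcc
  have hsuppμIcc : supp (F i) ⊆ Icc 0 (B i) :=
    supp_subset_of_closed _ isClosed_Icc hμIccC
  have hsuppνIcc : supp (F (1 - i)) ⊆ Icc 0 (B (1 - i)) :=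
    supp_subset_of_closed _ isClosed_Icc hνIccC
  -- the opponent's support is the single point b
  set b : ℝ := sInf (supp (F (1 - i))) with hb_def
  have hbν : b ∈ supp (F (1 - i)) :=
    (isClosed_supp _).csInf_mem (supp_nonempty _)
      ((bddBelow_Icc).mono hsuppνIcc)
  have hsuppν : supp (F (1 - i)) ⊆ {b} := by
    intro x hx
    have h1 : b ≤ x := csInf_le ((bddBelow_Icc).mono hsuppνIcc) hx
    have h2 : x ≤ sSup (supp (F (1 - i))) := le_csSup ((bddAbove_Icc).mono hsuppνIcc) hx
    rw [← ho] at h2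
    exact le_antisymm h2 h1
  have hνb : F (1 - i) ({b} : Set ℝ)ᶜ = 0 :=
    measure_mono_null (compl_subset_compl.2 hsuppν) (measure_compl_supp _)
  have hb_mem : b ∈ Icc 0 (B (1 - i)) := hsuppνIcc hbν
  have hb0 : 0 ≤ b := hb_mem.1
  -- player i's payoff against the pure bid b, and his equilibrium utility
  set f : ℝ → ℝ := fun x => payoff B v i x b with hf_def
  set U : ℝ := expUtil B v i (F i) (F (1 - i)) with hU_def
  have hexp : ∀ μ' : Measure ℝ, expUtil B v i μ' (F (1 - i)) = ∫ x, f x ∂μ' := by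
    intro μ'
    exact integral_congr_ae (Filter.Eventually.of_forall fun x =>
      integral_concentrated hνb _)
  have hU_int : U = ∫ x, f x ∂(F i) := hexp (F i)
  -- every affordable pure bid is no better than U
  have hA : ∀ x ∈ Icc 0 (B i), f x ≤ U := by
    intro x hx
    have hstrat : IsStrategy (B i) (Measure.dirac x) :=
      ⟨inferInstance, by rw [Measure.dirac_apply_of_mem hx]⟩
    have := hN.2 i (Measure.dirac x) hstrat
    rwa [hexp, integral_dirac] at this
  -- integrability of f
  have hIcc_ae : ∀ᵐ x ∂(F i), x ∈ Icc 0 (B i) := by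
    rw [ae_iff]
    exact hμIccC
  have hfint : Integrable f (F i) := by
    refine Integrable.mono' (integrable_const (v i + B i))
      (measurable_payoff_left b).aestronglyMeasurable ?_
    filter_upwards [hIcc_ae] with x hx
    calc ‖f x‖ = |payoff B v i x b| := rfl
      _ ≤ v i + |x| := abs_payoff_le hvi x b
      _ ≤ v i + B i := by
          have := abs_of_nonneg hx.1
          rw [this]; linarith [hx.2]
  -- F i-a.e. bid attains the utility U
  have hnull : F i {x | f x ≠ U} = 0 := by
    have hg_nonneg : 0 ≤ᵐ[F i] fun x => U - f x := by
      filter_upwards [hIcc_ae] with x hx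
      simp [sub_nonneg, hA x hx]
    have hg_int : Integrable (fun x => U - f x) (F i) := (integrable_const U).sub hfint
    have hg_zero : ∫ x, (U - f x) ∂(F i) = 0 := by
      rw [integral_sub (integrable_const U) hfint, integral_const]
      simp [← hU_int]
    have := (integral_eq_zero_iff_of_nonneg_ae hg_nonneg hg_int).1 hg_zero
    refine measure_mono_null ?_ (ae_iff.1 this)
    intro x hx
    simp only [mem_setOf_eq] at *
    intro h
    exact hx (by linarith [sub_eq_zero.1 h])

  -- the support of F i consists of at most three points
  set S : Set ℝ := {-U, b, v i - U} with hS_def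
  have hSfin : S.Finite := by
    rw [hS_def]; exact (Set.finite_singleton _).insert _ |>.insert _
  have hSnull : F i Sᶜ = 0 := by
    have hsub : Sᶜ ⊆ {x | f x ≠ U} ∪ (Icc 0 (B i))ᶜ := by
      intro x hx
      by_cases hfx : f x = U
      · by_cases hxI : x ∈ Icc 0 (B i)
        · exfalso
          apply hx
          rcases lt_trichotomy x b with hlt | heq | hgt
          · have : f x = -x := payoff_of_lt hlt
            left; rw [← hfx, this]; ring_nf
          · right; left; exact heq
          · have : f x = v i - x := payoff_of_gt hgt
            right; right
            simp only [mem_singleton_iff]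
            rw [← hfx, this]; ring_nf
        · right; exact hxI
      · left; exact hfx
    exact measure_mono_null hsub (measure_union_null hnull hμIccC)
  have hsuppS : supp (F i) ⊆ S := supp_subset_of_closed _ hSfin.isClosed hSnull
  -- every support point is an atom attaining utility U ("Lemma D")
  have hD : ∀ x0 ∈ supp (F i), f x0 = U ∧ x0 ∈ Icc 0 (B i) := by
    intro x0 hx0
    have hatom : F i {x0} ≠ 0 := by
      intro h0
      have hNopen : IsOpen (S \ {x0})ᶜ := ((hSfin.subset diff_subset).isClosed).isOpen_compl
      have hx0N : x0 ∈ (S \ {x0})ᶜ := by simp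
      have hle : F i (S \ {x0})ᶜ ≤ F i {x0} + F i Sᶜ := by
        refine le_trans (measure_mono ?_) (measure_union_le _ _)
        intro y hy
        by_cases hyS : y ∈ S
        · left
          simp only [mem_compl_iff, mem_diff, not_and, not_not] at hy
          exact hy hyS
        · right; exact hyS
      rw [h0, hSnull] at hle
      simp only [add_zero, le_zero_iff] at hle
      exact hx0 _ (hNopen.mem_nhds hx0N) hle
    constructor
    · by_contra h
      exact hatom (measure_mono_null (by simpa using h) hnull)
    · by_contra h
      exact hatom (measure_mono_null (by simpa using h) hμIccC)
  -- the two extreme points of the support of F i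
  set a1 : ℝ := sInf (supp (F i)) with ha1_def
  set a2 : ℝ := sSup (supp (F i)) with ha2_def
  have hbddB : BddBelow (supp (F i)) := (bddBelow_Icc).mono hsuppμIcc
  have hbddA : BddAbove (supp (F i)) := (bddAbove_Icc).mono hsuppμIcc
  have ha1 : a1 ∈ supp (F i) := (isClosed_supp _).csInf_mem (supp_nonempty _) hbddB
  have ha2 : a2 ∈ supp (F i) := (isClosed_supp _).csSup_mem (supp_nonempty _) hbddA
  have ha1D := hD a1 ha1
  have ha2D := hD a2 ha2
  have ha1_nonneg : 0 ≤ a1 := (hsuppμIcc ha1).1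
  -- Step P1 : b is at least min (B i) (v i)
  have hbmi : min (B i) (v i) ≤ b := by
    by_contra hlt
    push_neg at hlt
    have hUge : v i - b ≤ U := by
      by_contra h'
      push_neg at h'
      set x : ℝ := min (min (B i) (v i)) (b + (v i - b - U) / 2) with hx_def
      have hxb : b < x := lt_min hlt (by linarith)
      have hxI : x ∈ Icc 0 (B i) := by
        constructor
        · linarith
        · exact le_trans (min_le_left _ _) (min_le_left _ _)
      have := hA x hxI
      rw [show f x = v i - x from payoff_of_gt hxb] at this
      have hxle : x ≤ b + (v i - b - U) / 2 := min_le_right _ _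
      linarith
    have hUpos : 0 < U := by
      have h1 : min (B i) (v i) ≤ v i := min_le_right _ _
      linarith
    rcases lt_trichotomy a1 b with h1 | h1 | h1
    · have : f a1 = -a1 := payoff_of_lt h1
      rw [ha1D.1] at this
      linarith
    · have h2 : b < a2 := h1 ▸ hi
      have : f a2 = v i - a2 := payoff_of_gt h2
      rw [ha2D.1] at this
      linarith
    · have : f a1 = v i - a1 := payoff_of_gt h1
      rw [ha1D.1] at this
      linarith
  -- Step P2 : b ≤ B i
  have hbBi : b ≤ B i := by
    by_contra hgt
    push_neg at hgt
    have key : ∀ x0 ∈ supp (F i), x0 = -U := by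
      intro x0 hx0
      obtain ⟨hfx0, hx0I⟩ := hD x0 hx0
      have : f x0 = -x0 := payoff_of_lt (lt_of_le_of_lt hx0I.2 hgt)
      rw [hfx0] at this
      linarith
    have e1 := key a1 ha1
    have e2 := key a2 ha2
    rw [e1, e2] at hi
    exact lt_irrefl _ hi
  -- Step P3 : no support point lies above b; hence a2 = b, a1 = 0, U = 0
  have hsupp_le : ∀ x0 ∈ supp (F i), x0 ≤ b := by
    intro x0 hx0
    by_contra hgt
    push_neg at hgt
    obtain ⟨hfx0, hx0I⟩ := hD x0 hx0
    have hm : (b + x0) / 2 ∈ Icc 0 (B i) := by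
      constructor
      · linarith
      · have := hx0I.2; linarith
    have h1 := hA _ hm
    rw [show f ((b + x0) / 2) = v i - (b + x0) / 2 from payoff_of_gt (by linarith)] at h1
    rw [show f x0 = v i - x0 from payoff_of_gt hgt] at hfx0
    linarith
  have ha2b : a2 ≤ b := hsupp_le a2 ha2
  have ha1b : a1 < b := lt_of_lt_of_le hi ha2b
  have hUnonneg : 0 ≤ U := by
    have h0 := hA 0 ⟨le_refl 0, hB i⟩
    have : f 0 = winProb B v i 0 b * v i - 0 := rfl
    rw [this] at h0
    have := winProb_nonneg (B := B) (v := v) (i := i) (0 : ℝ) b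
    nlinarith
  have hU0 : U = 0 := by
    have : f a1 = -a1 := payoff_of_lt ha1b
    rw [ha1D.1] at this
    linarith
  have ha10 : a1 = 0 := by
    have : f a1 = -a1 := payoff_of_lt ha1b
    rw [ha1D.1, hU0] at this
    linarith
  have ha2eq : a2 = b := by
    rcases lt_or_eq_of_le ha2b with h1 | h1
    · exfalso
      have : f a2 = -a2 := payoff_of_lt h1
      rw [ha2D.1, hU0] at this
      rw [ha10] at hi
      linarith
    · exact h1
  have hbpos : 0 < b := by rw [← ha2eq, ← ha10]; exact hi

  -- tie-breaking analysis at b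
  have hfb : f b = 0 := by
    have := (hD b (ha2eq ▸ ha2)).1
    rw [hU0] at this; exact this
  have hw : winProb B v i b b * v i - b = 0 := hfb
  have hLmm : Lval B v = min (min (B i) (v i)) (min (B (1 - i)) (v (1 - i))) := Lval_eq B v i
  have hwP : winProb B v i b b =
      if b = Lval B v ∧ min (B (1 - i)) (v (1 - i)) < min (B i) (v i) then 1
      else if b = Lval B v ∧ min (B i) (v i) < min (B (1 - i)) (v (1 - i)) then 0
      else 1 / 2 := by
    unfold winProb
    rw [if_neg (lt_irrefl b), if_neg (lt_irrefl b)]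
  have hc1 : ¬(b = Lval B v ∧ min (B (1 - i)) (v (1 - i)) < min (B i) (v i)) := by
    rintro ⟨he, hlt⟩
    have h1 : b ≤ min (B (1 - i)) (v (1 - i)) := by
      rw [he, hLmm]; exact min_le_right _ _
    linarith
  have hc2 : ¬(b = Lval B v ∧ min (B i) (v i) < min (B (1 - i)) (v (1 - i))) := by
    rintro ⟨he, hlt⟩
    rw [hwP, if_neg hc1, if_pos ⟨he, hlt⟩] at hw
    simp at hw
    linarith
  have hwhalf : winProb B v i b b = 1 / 2 := by
    rw [hwP, if_neg hc1, if_neg hc2]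
  have hvi2b : v i = 2 * b := by
    rw [hwhalf] at hw; linarith
  have hmi_b : min (B i) (v i) = b := by
    rcases le_total (B i) (v i) with h1 | h1
    · rw [min_eq_left h1]
      rw [min_eq_left h1] at hbmi
      linarith
    · rw [min_eq_right h1] at hbmi
      linarith
  -- opponent machinery
  set Uo : ℝ := expUtil B v (1 - i) (F (1 - i)) (F i) with hUo_def
  have hAo : ∀ x ∈ Icc 0 (B (1 - i)), (∫ y, payoff B v (1 - i) x y ∂(F i)) ≤ Uo := by
    intro x hx
    have hstrat : IsStrategy (B (1 - i)) (Measure.dirac x) :=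
      ⟨inferInstance, by rw [Measure.dirac_apply_of_mem hx]⟩
    have h2 := hN.2 (1 - i) (Measure.dirac x) hstrat
    rw [hio] at h2
    have h3 : expUtil B v (1 - i) (Measure.dirac x) (F i)
        = ∫ y, payoff B v (1 - i) x y ∂(F i) := integral_dirac _ x
    rwa [h3] at h2
  have hUo_eq : Uo = ∫ y, payoff B v (1 - i) b y ∂(F i) :=
    integral_concentrated hνb (fun x => ∫ y, payoff B v (1 - i) x y ∂(F i))
  have hUo_nonneg : 0 ≤ Uo := by
    refine le_trans ?_ (hAo 0 ⟨le_refl 0, hB (1 - i)⟩)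
    refine integral_nonneg fun y => ?_
    have h1 : payoff B v (1 - i) 0 y = winProb B v (1 - i) 0 y * v (1 - i) - 0 := rfl
    have h2 := winProb_nonneg (B := B) (v := v) (i := 1 - i) (0 : ℝ) y
    show (0 : ℝ) ≤ payoff B v (1 - i) 0 y
    rw [h1]
    nlinarith
  have hgint : Integrable (fun y => payoff B v (1 - i) b y) (F i) := by
    refine Integrable.mono' (integrable_const (v (1 - i) + b))
      (measurable_payoff_right b).aestronglyMeasurable ?_
    refine Filter.Eventually.of_forall fun y => ?_
    calc ‖payoff B v (1 - i) b y‖ = |payoff B v (1 - i) b y| := rfl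
      _ ≤ v (1 - i) + |b| := abs_payoff_le hvo b y
      _ = v (1 - i) + b := by rw [abs_of_nonneg hb0]
  have hUo_le : Uo ≤ v (1 - i) - b := by
    rw [hUo_eq]
    calc ∫ y, payoff B v (1 - i) b y ∂(F i)
        ≤ ∫ _y, (v (1 - i) - b) ∂(F i) :=
          integral_mono hgint (integrable_const _) (fun y => payoff_le hvo b y)
      _ = v (1 - i) - b := by rw [integral_const]; simp
  have hbvo : b ≤ v (1 - i) := by linarith
  have hmo_b : min (B (1 - i)) (v (1 - i)) = b := by
    have hble : b ≤ min (B (1 - i)) (v (1 - i)) := le_min hb_mem.2 hbvo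
    rcases lt_or_eq_of_le hble with h1 | h1
    · exfalso
      exact hc2 ⟨by rw [hLmm, hmi_b]; exact (min_eq_left hble).symm, by rw [hmi_b]; exact h1⟩
    · exact h1.symm
  have hLb : Lval B v = b := by rw [hLmm, hmi_b, hmo_b, min_self]
  -- the support of F i is exactly {0, b}
  have hsupp_sub : supp (F i) ⊆ ({0, b} : Set ℝ) := by
    intro x0 hx0
    obtain ⟨hfx0, _⟩ := hD x0 hx0
    rcases lt_or_eq_of_le (hsupp_le x0 hx0) with h1 | h1
    · left
      have : f x0 = -x0 := payoff_of_lt h1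
      rw [hfx0, hU0] at this
      linarith
    · right; exact h1
  have hsupp_eq : supp (F i) = ({0, b} : Set ℝ) := by
    refine subset_antisymm hsupp_sub ?_
    intro x hx
    rcases hx with h1 | h1
    · rw [h1, ← ha10]; exact ha1
    · rw [mem_singleton_iff.1 h1, ← ha2eq]; exact ha2
  have h2null : F i (({0, b} : Set ℝ))ᶜ = 0 := by
    rw [← hsupp_eq]; exact measure_compl_supp _
  have htp : ∀ g : ℝ → ℝ, ∫ y, g y ∂(F i) = g b + (F i {0}).toReal * (g 0 - g b) :=
    fun g => integral_two_point h2null hbpos.ne g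
  set α : ℝ := (F i {0}).toReal with hα_def
  -- the opponent's tie probability at b is 1/2
  have hwo : winProb B v (1 - i) b b = 1 / 2 := by
    unfold winProb
    rw [if_neg (lt_irrefl b), if_neg (lt_irrefl b), if_neg ?_, if_neg ?_]
    · rintro ⟨-, h2⟩
      rw [hio, hmi_b, hmo_b] at h2
      exact lt_irrefl b h2
    · rintro ⟨-, h2⟩
      rw [hio, hmi_b, hmo_b] at h2
      exact lt_irrefl b h2
  have hUo_val : Uo = v (1 - i) / 2 - b + α * (v (1 - i) / 2) := by
    have hg0 : payoff B v (1 - i) b 0 = v (1 - i) - b := payoff_of_gt hbpos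
    have hgb : payoff B v (1 - i) b b = v (1 - i) / 2 - b := by
      unfold payoff; rw [hwo]; ring
    rw [hUo_eq, htp, hg0, hgb]; ring
  -- the opponent can guarantee almost α * v (1 - i) by small positive bids
  have hdev : α * v (1 - i) ≤ Uo := by
    by_contra h'
    push_neg at h'
    set ε : ℝ := α * v (1 - i) - Uo with hε_def
    have hεpos : 0 < ε := by linarith
    set x : ℝ := min (b / 2) (ε / 2) with hx_def
    have hx_pos : 0 < x := lt_min (by linarith) (by linarith)
    have hx_lt_b : x < b := lt_of_le_of_lt (min_le_left _ _) (by linarith)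
    have h2 := hAo x ⟨hx_pos.le, le_trans hx_lt_b.le hb_mem.2⟩
    rw [htp, payoff_of_lt hx_lt_b, payoff_of_gt hx_pos] at h2
    have hxε : x ≤ ε / 2 := min_le_right _ _
    have h3 : α * v (1 - i) - x ≤ Uo := by ring_nf at h2 ⊢; linarith
    linarith
  have hαle : α * v (1 - i) ≤ v (1 - i) - 2 * b := by linarith
  refine ⟨?_, ?_, ?_, ?_⟩
  · rw [hLb]; exact hsupp_eq
  · rw [hLb]
    have hrw : 1 - 2 * b / v (1 - i) = (v (1 - i) - 2 * b) / v (1 - i) := by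
      field_simp
    rw [hrw, le_div_iff₀ hvo]
    exact hαle
  · exact hU0
  · rw [hLb]; linarith
end
end

section
/- Let (F_1, F_2) be any Nash equilibrium of the single-item all-pay auction with parameters (B_1, B_2, v_1, v_2). Then: (1) if B_1 = B_2 and B_2 < (1/2)·min{v_1, v_2}, then inf Supp(F_i) = sup Supp(F_i) for each i ∈ {1,2}; (2) if B_1 = B_2 = (1/2)·min{v_1, v_2} and i is a player with v_i = min{v_1, v_2}, then either inf Supp(F_1) = sup Supp(F_1) and inf Supp(F_2) = sup Supp(F_2), or inf Supp(F_i) = 0 and inf Supp(F_{3−i}) = sup Supp(F_{3−i}); (3) if B_1 ≠ B_2, then inf Supp(F_1) = inf Supp(F_2) = 0. -/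
open MeasureTheory Set

noncomputable section

namespace APA

variable {B v : Fin 2 → ℝ} {F : Fin 2 → Measure ℝ} {i : Fin 2} {x y : ℝ}

lemma winProb_nonneg : 0 ≤ winProb B v i x y := by
  unfold winProb; split_ifs <;> norm_num

lemma winProb_le_one : winProb B v i x y ≤ 1 := by
  unfold winProb; split_ifs <;> norm_num

lemma winProb_diag_coin (h : min (B (1 - i)) (v (1 - i)) = min (B i) (v i)) :
    winProb B v i x x = 1 / 2 := by
  unfold winProb
  rw [if_neg (lt_irrefl x), if_neg (lt_irrefl x),
    if_neg (by rintro ⟨-, hlt⟩; rw [h] at hlt; exact lt_irrefl _ hlt),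
    if_neg (by rintro ⟨-, hlt⟩; rw [h] at hlt; exact lt_irrefl _ hlt)]

lemma winProb_diag_of_gt (hx : x = Lval B v)
    (h : min (B i) (v i) < min (B (1 - i)) (v (1 - i))) :
    winProb B v i x x = 0 := by
  unfold winProb
  rw [if_neg (lt_irrefl x), if_neg (lt_irrefl x),
    if_neg (by rintro ⟨-, hlt⟩; exact absurd h (not_lt.2 hlt.le)), if_pos ⟨hx, h⟩]

lemma winProb_diag_cond (h : 1 ≤ winProb B v i x x) :
    x = Lval B v ∧ min (B (1 - i)) (v (1 - i)) < min (B i) (v i) := by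
  unfold winProb at h
  rw [if_neg (lt_irrefl x), if_neg (lt_irrefl x)] at h
  by_cases hc : x = Lval B v ∧ min (B (1 - i)) (v (1 - i)) < min (B i) (v i)
  · exact hc
  · rw [if_neg hc] at h; split_ifs at h <;> norm_num at h

/-! ### Support lemmas -/

variable {μ : Measure ℝ}

lemma isClosed_supp (μ : Measure ℝ) : IsClosed (supp μ) := by
  rw [← isOpen_compl_iff]
  refine isOpen_iff_mem_nhds.2 fun z hz => ?_
  simp only [supp, mem_compl_iff, mem_setOf_eq, not_forall] at hz
  obtain ⟨U, hU, hU0⟩ := hz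
  push_neg at hU0
  obtain ⟨V, hVU, hVo, hzV⟩ := mem_nhds_iff.mp hU
  refine Filter.mem_of_superset (hVo.mem_nhds hzV) fun w hw => ?_
  intro hw'
  exact hw' V (hVo.mem_nhds hw) (measure_mono_null hVU hU0)

lemma measure_compl_supp (μ : Measure ℝ) : μ (supp μ)ᶜ = 0 := by
  set S : Set (Set ℝ) := {U | IsOpen U ∧ μ U = 0} with hS
  obtain ⟨T, hTc, hTS, hT⟩ := TopologicalSpace.isOpen_sUnion_countable S fun s hs => hs.1
  have h1 : (supp μ)ᶜ ⊆ ⋃₀ S := by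
    intro z hz
    simp only [supp, mem_compl_iff, mem_setOf_eq, not_forall] at hz
    obtain ⟨U, hU, hU0⟩ := hz
    push_neg at hU0
    obtain ⟨V, hVU, hVo, hzV⟩ := mem_nhds_iff.mp hU
    exact ⟨V, ⟨hVo, measure_mono_null hVU hU0⟩, hzV⟩
  refine measure_mono_null (h1.trans hT.symm.subset) ?_
  exact (measure_sUnion_null_iff hTc).2 fun s hs => (hTS hs).2

lemma supp_subset_of_compl_null {C : Set ℝ} (hC : IsClosed C) (h : μ Cᶜ = 0) :
    supp μ ⊆ C := by
  intro z hz
  by_contra hzC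
  exact hz Cᶜ (hC.isOpen_compl.mem_nhds hzC) h

lemma mem_supp_of_singleton (h : μ {x} ≠ 0) : x ∈ supp μ := by
  intro U hU h0
  exact h (measure_mono_null (singleton_subset_iff.2 (mem_of_mem_nhds hU)) h0)

lemma exists_of_ne {A N : Set ℝ} (hA : μ A ≠ 0) (hN : μ N = 0) : ∃ z ∈ A, z ∉ N := by
  by_contra h
  push_neg at h
  exact hA (measure_mono_null h hN)

lemma supp_nonempty (hμ : μ univ ≠ 0) : (supp μ).Nonempty := by
  rcases eq_empty_or_nonempty (supp μ) with h | h
  · exfalso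
    apply hμ
    have := measure_compl_supp μ
    rwa [h, compl_empty] at this
  · exact h

lemma measurable_atomMass (ν : Measure ℝ) [IsFiniteMeasure ν] :
    Measurable fun z => (ν {z}).toReal := by
  have hc : Set.Countable {z : ℝ | 0 < ν {z}} :=
    Measure.countable_meas_pos_of_disjoint_iUnion (fun z => measurableSet_singleton z)
      (fun a b hab => by simpa [Function.onFun] using hab)
  intro A hA
  have hdecomp : (fun z => (ν {z}).toReal) ⁻¹' A =
      ({z : ℝ | 0 < ν {z}} ∩ (fun z => (ν {z}).toReal) ⁻¹' A) ∪
        ({z : ℝ | 0 < ν {z}}ᶜ ∩ (fun z => (ν {z}).toReal) ⁻¹' A) := by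
    rw [← union_inter_distrib_right, union_compl_self, univ_inter]
  rw [hdecomp]
  refine MeasurableSet.union ((hc.mono inter_subset_left).measurableSet) ?_
  by_cases h0 : (0 : ℝ) ∈ A
  · have heq : ({z : ℝ | 0 < ν {z}}ᶜ ∩ (fun z => (ν {z}).toReal) ⁻¹' A) =
        {z : ℝ | 0 < ν {z}}ᶜ := by
      ext w
      simp only [mem_inter_iff, mem_compl_iff, mem_setOf_eq, not_lt, nonpos_iff_eq_zero,
        mem_preimage, and_iff_left_iff_imp]
      intro hw; rw [hw]; simpa
    rw [heq]
    exact hc.measurableSet.compl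
  · have heq : ({z : ℝ | 0 < ν {z}}ᶜ ∩ (fun z => (ν {z}).toReal) ⁻¹' A) = ∅ := by
      ext w
      simp only [mem_inter_iff, mem_compl_iff, mem_setOf_eq, not_lt, nonpos_iff_eq_zero,
        mem_preimage, mem_empty_iff_false, iff_false, not_and]
      intro hw hwA; rw [hw] at hwA; simpa using h0 (by simpa using hwA)
    rw [heq]
    exact MeasurableSet.empty

/-! ### Key quantities -/

def Wf (B v : Fin 2 → ℝ) (F : Fin 2 → Measure ℝ) (i : Fin 2) (x : ℝ) : ℝ :=
  (F (1 - i) (Iio x)).toReal + winProb B v i x x * (F (1 - i) {x}).toReal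

def Uf (B v : Fin 2 → ℝ) (F : Fin 2 → Measure ℝ) (i : Fin 2) (x : ℝ) : ℝ :=
  v i * Wf B v F i x - x

def uval (B v : Fin 2 → ℝ) (F : Fin 2 → Measure ℝ) (i : Fin 2) : ℝ :=
  expUtil B v i (F i) (F (1 - i))

def tval (F : Fin 2 → Measure ℝ) (i : Fin 2) : ℝ := sInf (supp (F i))

lemma Wf_nonneg (i : Fin 2) (x : ℝ) : 0 ≤ Wf B v F i x :=
  add_nonneg ENNReal.toReal_nonneg (mul_nonneg winProb_nonneg ENNReal.toReal_nonneg)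

lemma Wf_ge_Iio (i : Fin 2) (x : ℝ) : (F (1 - i) (Iio x)).toReal ≤ Wf B v F i x := by
  have := mul_nonneg (winProb_nonneg (B := B) (v := v) (i := i) (x := x) (y := x))
    (ENNReal.toReal_nonneg (a := F (1 - i) {x}))
  unfold Wf; linarith

lemma measurable_Uf (i : Fin 2) [IsFiniteMeasure (F (1 - i))] :
    Measurable (Uf B v F i) := by
  set ν := F (1 - i)
  have h1 : Measurable fun z => (ν (Iio z)).toReal := by
    apply Monotone.measurable
    intro a b hab
    exact ENNReal.toReal_mono (measure_ne_top ν _) (measure_mono (Iio_subset_Iio hab))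
  have h2 : Measurable fun z : ℝ => winProb B v i z z := by
    have heq : (fun z : ℝ => winProb B v i z z) = fun z =>
        if z = Lval B v then
          (if min (B (1 - i)) (v (1 - i)) < min (B i) (v i) then 1
           else if min (B i) (v i) < min (B (1 - i)) (v (1 - i)) then 0 else 1 / 2)
        else 1 / 2 := by
      funext z
      rw [winProb, if_neg (lt_irrefl z), if_neg (lt_irrefl z)]
      by_cases hL : z = Lval B v <;> simp [hL]
    rw [heq]
    exact Measurable.ite
      (by simp [MeasurableSet.singleton, show {z : ℝ | z = Lval B v} = {Lval B v} from rfl])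
      measurable_const measurable_const
  have h3 : Measurable fun z => (ν {z}).toReal := measurable_atomMass ν
  unfold Uf Wf
  exact ((measurable_const.mul (h1.add (h2.mul h3)))).sub measurable_id

section withNash

variable (hN : IsNash B v F)
include hN

lemma probF (i : Fin 2) : IsProbabilityMeasure (F i) := ((hN.1) i).1

lemma integral_payoff (i : Fin 2) (x : ℝ) :
    ∫ y, payoff B v i x y ∂(F (1 - i)) = Uf B v F i x := by
  haveI := probF hN (1 - i)
  set ν := F (1 - i)
  have hfun : (fun y => winProb B v i x y) =
      fun y => (Iio x).indicator (fun _ => (1 : ℝ)) y +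
        ({x} : Set ℝ).indicator (fun _ => winProb B v i x x) y := by
    funext y
    rcases lt_trichotomy y x with h | h | h
    · simp only [indicator_of_mem (mem_Iio.2 h), indicator_of_notMem
        (by simp [h.ne] : y ∉ ({x} : Set ℝ))]
      rw [winProb]; rw [if_pos h]; ring
    · subst h
      simp only [indicator_of_notMem (by simp : y ∉ Iio y),
        indicator_of_mem (mem_singleton y)]
      ring
    · simp only [indicator_of_notMem (by simp [not_lt.2 h.le] : y ∉ Iio x),
        indicator_of_notMem (by simp [h.ne'] : y ∉ ({x} : Set ℝ))]
      rw [winProb, if_neg (by linarith), if_pos h]; ring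
  have hint1 : Integrable ((Iio x).indicator fun _ => (1 : ℝ)) ν :=
    (integrable_const (1 : ℝ)).indicator measurableSet_Iio
  have hint2 : Integrable (({x} : Set ℝ).indicator fun _ => winProb B v i x x) ν :=
    (integrable_const _).indicator (measurableSet_singleton x)
  have hw : Integrable (fun y => winProb B v i x y) ν := by
    rw [hfun]; exact hint1.add hint2
  calc ∫ y, payoff B v i x y ∂ν
      = ∫ y, (winProb B v i x y * v i - x) ∂ν := rfl
    _ = (∫ y, winProb B v i x y ∂ν) * v i - ∫ _, x ∂ν := by
        rw [integral_sub (hw.mul_const _) (integrable_const _), integral_mul_const]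
    _ = Uf B v F i x := by
        rw [hfun, integral_add hint1 hint2, integral_indicator_const _ measurableSet_Iio,
          integral_indicator_const _ (measurableSet_singleton x), integral_const]
        simp only [Measure.real, measure_univ, ENNReal.toReal_one, smul_eq_mul, one_smul, one_mul]
        rw [Uf, Wf]; ring

lemma Uf_le {i : Fin 2} {x : ℝ} (hx : x ∈ Icc 0 (B i)) : Uf B v F i x ≤ uval B v F i := by
  have hstrat : IsStrategy (B i) (Measure.dirac x) :=
    ⟨Measure.dirac.isProbabilityMeasure, by rw [Measure.dirac_apply_of_mem hx]⟩
  have h := hN.2 i (Measure.dirac x) hstrat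
  rw [expUtil, integral_dirac _ x, integral_payoff hN i x] at h
  exact h

lemma ae_Icc (i : Fin 2) : ∀ᵐ x ∂F i, x ∈ Icc 0 (B i) := by
  haveI := probF hN i
  rw [ae_iff]
  have heq : {x : ℝ | ¬ x ∈ Icc 0 (B i)} = (Icc 0 (B i))ᶜ := rfl
  rw [heq, measure_compl measurableSet_Icc (measure_ne_top _ _), (hN.1 i).2, measure_univ]
  simp

lemma massR_le_one (i : Fin 2) (s : Set ℝ) : (F i s).toReal ≤ 1 := by
  haveI := probF hN i
  exact ENNReal.toReal_le_of_le_ofReal zero_le_one (by simpa using prob_le_one)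

lemma Iic_split (j : Fin 2) (x : ℝ) :
    (F j (Iic x)).toReal = (F j (Iio x)).toReal + (F j {x}).toReal := by
  haveI := probF hN j
  rw [← ENNReal.toReal_add (measure_ne_top _ _) (measure_ne_top _ _), ← measure_union
    (by simp) (measurableSet_singleton x), Iio_union_right]

lemma Wf_le_Iic (i : Fin 2) (x : ℝ) : Wf B v F i x ≤ (F (1 - i) (Iic x)).toReal := by
  rw [Iic_split hN]
  have h1 : winProb B v i x x * (F (1 - i) {x}).toReal ≤ (F (1 - i) {x}).toReal :=
    mul_le_of_le_one_left ENNReal.toReal_nonneg winProb_le_one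
  unfold Wf; linarith

lemma integrable_Uf (i : Fin 2) : Integrable (Uf B v F i) (F i) := by
  haveI := probF hN i
  haveI := probF hN (1 - i)
  refine ⟨(measurable_Uf i).aestronglyMeasurable, ?_⟩
  apply HasFiniteIntegral.of_bounded (C := |v i| * 2 + |B i|)
  filter_upwards [ae_Icc hN i] with x hx
  have h1 : Wf B v F i x ≤ 2 := by
    have := Wf_le_Iic hN i x
    have := massR_le_one hN (1 - i) (Iic x)
    have := massR_le_one hN (1 - i) {x}
    have := massR_le_one hN (1 - i) (Iio x)
    unfold Wf at *
    nlinarith [winProb_le_one (B := B) (v := v) (i := i) (x := x) (y := x),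
      ENNReal.toReal_nonneg (a := F (1 - i) {x}),
      winProb_nonneg (B := B) (v := v) (i := i) (x := x) (y := x)]
  have h2 : 0 ≤ Wf B v F i x := Wf_nonneg i x
  have h3 : |x| ≤ |B i| := by
    rw [abs_of_nonneg hx.1]
    exact le_trans hx.2 (le_abs_self _)
  rw [Real.norm_eq_abs, Uf]
  calc |v i * Wf B v F i x - x| ≤ |v i * Wf B v F i x| + |x| := abs_sub _ _
    _ ≤ |v i| * 2 + |B i| := by
        rw [abs_mul]
        have h4 : |Wf B v F i x| ≤ 2 := by rw [abs_of_nonneg h2]; exact h1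
        have := abs_nonneg (v i)
        nlinarith

lemma uval_eq (i : Fin 2) : uval B v F i = ∫ x, Uf B v F i x ∂F i := by
  have hfun : (fun xi => ∫ xo, payoff B v i xi xo ∂(F (1 - i))) = Uf B v F i :=
    funext fun x => integral_payoff hN i x
  rw [uval, expUtil, hfun]

lemma ae_Uf (i : Fin 2) : ∀ᵐ x ∂F i, Uf B v F i x = uval B v F i := by
  haveI := probF hN i
  have hnn : 0 ≤ᵐ[F i] fun x => uval B v F i - Uf B v F i x := by
    filter_upwards [ae_Icc hN i] with x hx
    simpa using sub_nonneg.2 (Uf_le hN hx)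
  have hint : Integrable (fun x => uval B v F i - Uf B v F i x) (F i) :=
    (integrable_const _).sub (integrable_Uf hN i)
  have hzero : ∫ x, (uval B v F i - Uf B v F i x) ∂F i = 0 := by
    rw [integral_sub (integrable_const _) (integrable_Uf hN i), integral_const]
    simp [← uval_eq hN i]
  have := (integral_eq_zero_iff_of_nonneg_ae hnn hint).1 hzero
  filter_upwards [this] with x hx
  have hx' : uval B v F i - Uf B v F i x = 0 := hx
  linarith

lemma null_opt (i : Fin 2) : F i {x | Uf B v F i x ≠ uval B v F i} = 0 := by
  have := ae_Uf hN i
  rw [ae_iff] at this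
  exact this

lemma Icc_compl_null (i : Fin 2) : F i (Icc 0 (B i))ᶜ = 0 := by
  have := ae_Icc hN i
  rw [ae_iff] at this
  exact this

lemma supp_sub (i : Fin 2) : supp (F i) ⊆ Icc 0 (B i) :=
  supp_subset_of_compl_null isClosed_Icc (Icc_compl_null hN i)

lemma supp_ne (i : Fin 2) : (supp (F i)).Nonempty := by
  haveI := probF hN i
  exact supp_nonempty (by simp)

lemma supp_bdd (i : Fin 2) : BddBelow (supp (F i)) :=
  (bddBelow_Icc).mono (supp_sub hN i)

lemma t_mem (i : Fin 2) : tval F i ∈ supp (F i) :=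
  (isClosed_supp _).csInf_mem (supp_ne hN i) (supp_bdd hN i)

lemma t_mem_Icc (i : Fin 2) : tval F i ∈ Icc 0 (B i) := supp_sub hN i (t_mem hN i)

lemma Iio_t_null (i : Fin 2) : F i (Iio (tval F i)) = 0 := by
  refine measure_mono_null (fun y hy => ?_) (measure_compl_supp (F i))
  intro hy'
  exact absurd (csInf_le (supp_bdd hN i) hy') (not_le.2 hy)

lemma exists_opt {i : Fin 2} {x₀ : ℝ} (hx₀ : x₀ ∈ supp (F i)) {η : ℝ} (hη : 0 < η) :
    ∃ x, tval F i ≤ x ∧ x ∈ Icc 0 (B i) ∧ |x - x₀| < η ∧ Uf B v F i x = uval B v F i := by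
  have hA : F i (Ioo (x₀ - η) (x₀ + η)) ≠ 0 :=
    hx₀ _ (Ioo_mem_nhds (by linarith) (by linarith))
  have hNnull : F i ({x | Uf B v F i x ≠ uval B v F i} ∪
      (Iio (tval F i) ∪ (Icc 0 (B i))ᶜ)) = 0 :=
    measure_union_null (null_opt hN i)
      (measure_union_null (Iio_t_null hN i) (Icc_compl_null hN i))
  obtain ⟨x, hxA, hxN⟩ := exists_of_ne hA hNnull
  simp only [mem_union, not_or, mem_setOf_eq, not_not, mem_compl_iff, mem_Iio, not_lt] at hxN
  exact ⟨x, hxN.2.1, hxN.2.2, abs_sub_lt_iff.2 ⟨by linarith [hxA.2], by linarith [hxA.1]⟩,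
    hxN.1⟩

lemma atom_opt {i : Fin 2} {x : ℝ} (hx : F i {x} ≠ 0) : Uf B v F i x = uval B v F i := by
  by_contra h
  exact hx (measure_mono_null (by simpa using h) (null_opt hN i))

lemma mass_pos {j : Fin 2} {s : Set ℝ} (h : F j s ≠ 0) : 0 < (F j s).toReal := by
  haveI := probF hN j
  exact ENNReal.toReal_pos h (measure_ne_top _ _)

lemma L_bot (i : Fin 2) (hv : 0 < v i) :
    uval B v F i ≤ v i * (F (1 - i) (Iic (tval F i))).toReal - tval F i := by
  haveI := probF hN (1 - i)
  set t := tval F i with ht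
  have stepA : ∀ η : ℝ, 0 < η →
      uval B v F i ≤ v i * (F (1 - i) (Iio (t + η))).toReal - t := by
    intro η hη
    obtain ⟨x, hxt, hxIcc, hxd, hxU⟩ := exists_opt hN (t_mem hN i) hη
    have hxlt : x < t + η := by
      rcases abs_sub_lt_iff.1 hxd with ⟨h1, -⟩; linarith
    have h1 : Wf B v F i x ≤ (F (1 - i) (Iio (t + η))).toReal :=
      (Wf_le_Iic hN i x).trans (ENNReal.toReal_mono (measure_ne_top _ _)
        (measure_mono (fun y hy => lt_of_le_of_lt (mem_Iic.1 hy) hxlt)))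
    calc uval B v F i = v i * Wf B v F i x - x := hxU.symm
      _ ≤ v i * (F (1 - i) (Iio (t + η))).toReal - t := by
          have := mul_le_mul_of_nonneg_left h1 hv.le
          linarith
  have hiInter : ⋂ n : ℕ, Iio (t + 1 / (n + 1)) = Iic t := by
    ext y
    simp only [mem_iInter, mem_Iio, mem_Iic]
    constructor
    · intro h
      by_contra hy
      push_neg at hy
      obtain ⟨n, hn⟩ := exists_nat_one_div_lt (sub_pos.2 hy)
      have := h n
      linarith
    · intro h n
      have hpos : (0:ℝ) < 1 / (n + 1) := by positivity
      linarith
  have htendE : Filter.Tendsto (fun n : ℕ => F (1 - i) (Iio (t + 1 / (n + 1)))) Filter.atTop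
      (nhds (F (1 - i) (Iic t))) := by
    have := MeasureTheory.tendsto_measure_iInter_atTop (μ := F (1 - i))
      (s := fun n : ℕ => Iio (t + 1 / (n + 1)))
      (fun n => measurableSet_Iio.nullMeasurableSet)
      (fun m n hmn => Iio_subset_Iio (by
        have hq : (1:ℝ) / (n + 1) ≤ 1 / (m + 1) := by
          apply one_div_le_one_div_of_le (by positivity)
          exact_mod_cast Nat.add_le_add_right hmn 1
        linarith))
      ⟨0, measure_ne_top _ _⟩
    rwa [hiInter] at this
  have htendR : Filter.Tendsto
      (fun n : ℕ => v i * (F (1 - i) (Iio (t + 1 / (n + 1)))).toReal - t) Filter.atTop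
      (nhds (v i * (F (1 - i) (Iic t)).toReal - t)) :=
    (((ENNReal.tendsto_toReal (measure_ne_top _ _)).comp htendE).const_mul _).sub_const _
  exact ge_of_tendsto' htendR fun n => stepA _ (by positivity)

lemma L_up (i : Fin 2) (hv : 0 < v i) {x : ℝ} (hx0 : 0 ≤ x) (hxB : x < B i) :
    v i * (F (1 - i) (Iic x)).toReal - x ≤ uval B v F i := by
  haveI := probF hN (1 - i)
  apply le_of_forall_pos_le_add
  intro ε hε
  set η := min ε (B i - x) with hηdef
  have hη : 0 < η := lt_min hε (by linarith)
  have hmem : x + η ∈ Icc 0 (B i) :=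
    ⟨by linarith, by have := min_le_right ε (B i - x); linarith⟩
  have h1 : (F (1 - i) (Iic x)).toReal ≤ (F (1 - i) (Iio (x + η))).toReal :=
    ENNReal.toReal_mono (measure_ne_top _ _)
      (measure_mono fun y hy => lt_of_le_of_lt (mem_Iic.1 hy) (by linarith))
  have h3 : v i * (F (1 - i) (Iio (x + η))).toReal - (x + η) ≤ Uf B v F i (x + η) := by
    unfold Uf
    have := mul_le_mul_of_nonneg_left (Wf_ge_Iio i (x + η) (B := B) (v := v) (F := F)) hv.le
    linarith
  have h4 := Uf_le hN hmem
  have h5 := min_le_left ε (B i - x)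
  have := mul_le_mul_of_nonneg_left h1 hv.le
  linarith

lemma u_nonneg (i : Fin 2) (hv : 0 < v i) (h0B : 0 ≤ B i) : 0 ≤ uval B v F i := by
  have h := Uf_le hN (i := i) (x := 0) ⟨le_refl 0, h0B⟩
  have h2 : 0 ≤ Uf B v F i 0 := by
    unfold Uf
    have := mul_nonneg hv.le (Wf_nonneg (B := B) (v := v) (F := F) i 0)
    linarith
  linarith

lemma L_tie {i : Fin 2} {x : ℝ} (hv : 0 < v i) (hi : F i {x} ≠ 0) (ho : F (1 - i) {x} ≠ 0)
    (hx0 : 0 ≤ x) (hxB : x < B i) :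
    x = Lval B v ∧ min (B (1 - i)) (v (1 - i)) < min (B i) (v i) := by
  have h1 := atom_opt hN hi
  have h2 := L_up hN i hv hx0 hxB
  rw [← h1] at h2
  rw [Iic_split hN] at h2
  unfold Uf Wf at h2
  have hpos := mass_pos hN ho
  have hc : 1 ≤ winProb B v i x x := by
    by_contra hlt
    push_neg at hlt
    have h6 : winProb B v i x x * ((F (1 - i)) {x}).toReal < 1 * ((F (1 - i)) {x}).toReal :=
      mul_lt_mul_of_pos_right hlt hpos
    nlinarith
  exact winProb_diag_cond hc

lemma L_noDouble {x : ℝ} (hv : ∀ j, 0 < v j) (h0 : F 0 {x} ≠ 0) (h1 : F 1 {x} ≠ 0)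
    (hx0 : 0 ≤ x) (hB0 : x < B 0) (hB1 : x < B 1) : False := by
  have e0 : (1 : Fin 2) - 0 = 1 := rfl
  have e1 : (1 : Fin 2) - 1 = 0 := rfl
  have hA := L_tie hN (i := 0) (hv 0) h0 (by rw [e0]; exact h1) hx0 hB0
  have hB' := L_tie hN (i := 1) (hv 1) h1 (by rw [e1]; exact h0) hx0 hB1
  rw [e0] at hA
  rw [e1] at hB'
  exact lt_asymm hA.2 hB'.2

lemma L_lowgap (a : Fin 2) (hva : 0 < v a) (h0B : 0 ≤ B a)
    (h : tval F a < tval F (1 - a)) :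
    uval B v F a = 0 ∧ tval F a = 0 ∧ F a {0} ≠ 0 ∧ F a (Ioo 0 (tval F (1 - a))) = 0 := by
  set b := 1 - a with hb
  set ta := tval F a
  set tb := tval F b
  have hsmall : ∀ x', x' < tb → Uf B v F a x' = -x' := by
    intro x' hx'
    have hW0 : Wf B v F a x' = 0 := by
      have hle : Wf B v F a x' ≤ (F b (Iic x')).toReal := Wf_le_Iic hN a x'
      have hz : F b (Iic x') = 0 :=
        measure_mono_null (fun y hy => lt_of_le_of_lt (mem_Iic.1 hy) hx') (Iio_t_null hN b)
      rw [hz] at hle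
      simp only [ENNReal.toReal_zero] at hle
      exact le_antisymm hle (Wf_nonneg a x')
    unfold Uf
    rw [hW0]; ring
  obtain ⟨x, hxt, hxIcc, hxd, hxU⟩ := exists_opt hN (t_mem hN a) (sub_pos.2 h)
  have hxlt : x < tb := by
    rcases abs_sub_lt_iff.1 hxd with ⟨h1, -⟩; linarith
  have hux : uval B v F a = -x := by rw [← hxU, hsmall x hxlt]
  have hun := u_nonneg hN a hva h0B
  have hx0 : x = 0 := le_antisymm (by linarith) hxIcc.1
  have hu0 : uval B v F a = 0 := by rw [hux, hx0, neg_zero]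
  have hta : ta = 0 := le_antisymm (by rw [← hx0]; exact hxt) (t_mem_Icc hN a).1
  have hD : F a (Iio tb \ {0}) = 0 := by
    by_contra hD
    have hNnull : F a ({x' | Uf B v F a x' ≠ uval B v F a} ∪ (Icc 0 (B a))ᶜ) = 0 :=
      measure_union_null (null_opt hN a) (Icc_compl_null hN a)
    obtain ⟨x', hx'A, hx'N⟩ := exists_of_ne hD hNnull
    simp only [mem_union, not_or, mem_setOf_eq, not_not, mem_compl_iff] at hx'N
    have hz : Uf B v F a x' = 0 := by rw [hx'N.1, hu0]
    rw [hsmall x' hx'A.1] at hz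
    exact hx'A.2 (by simpa using (neg_eq_zero.1 hz))
  have hIio : F a (Iio tb) ≠ 0 := by
    have hnb : Iio tb ∈ nhds (0 : ℝ) := Iio_mem_nhds (by linarith [h, hta])
    have h0supp : (0:ℝ) ∈ supp (F a) := by rw [← hta]; exact t_mem hN a
    exact h0supp _ hnb
  have hatom : F a {0} ≠ 0 := by
    intro h0
    apply hIio
    refine measure_mono_null (fun y hy => ?_) (measure_union_null h0 hD)
    by_cases hy0 : y = 0
    · exact mem_union_left _ (by simp [hy0])
    · exact mem_union_right _ ⟨hy, by simp [hy0]⟩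
  exact ⟨hu0, hta, hatom,
    measure_mono_null (fun y hy => (mem_diff y).2
      ⟨mem_Iio.2 hy.2, by simpa using ne_of_gt hy.1⟩) hD⟩


lemma L_bot' (i : Fin 2) (hv : 0 < v i) (h : tval F i ≤ tval F (1 - i)) :
    uval B v F i ≤ v i * (F (1 - i) {tval F i}).toReal - tval F i := by
  have h0 : F (1 - i) (Iio (tval F i)) = 0 :=
    measure_mono_null (Iio_subset_Iio h) (Iio_t_null hN (1 - i))
  have hb := L_bot hN i hv
  rw [Iic_split hN (1 - i), h0] at hb
  simpa using hb

lemma supp_eq_singleton (i : Fin 2) (h : tval F i = B i) : supp (F i) = {B i} := by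
  apply Subset.antisymm
  · intro y hy
    have h1 : tval F i ≤ y := csInf_le (supp_bdd hN i) hy
    have h2 : y ≤ B i := (supp_sub hN i hy).2
    simp [le_antisymm h2 (h ▸ h1)]
  · intro y hy
    obtain ⟨z, hz⟩ := supp_ne hN i
    have h1 : tval F i ≤ z := csInf_le (supp_bdd hN i) hz
    have h2 : z ≤ B i := (supp_sub hN i hz).2
    have hzB : z = B i := le_antisymm h2 (h ▸ h1)
    rw [mem_singleton_iff.1 hy, ← hzB]
    exact hz

lemma degenerate_of (i : Fin 2) (h : tval F i = B i) :
    sInf (supp (F i)) = sSup (supp (F i)) := by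
  rw [supp_eq_singleton hN i h]
  simp

lemma top_mass (i : Fin 2) (hBB : B (1 - i) = B i) :
    (F (1 - i) (Iio (B i))).toReal + (F (1 - i) {B i}).toReal = 1 := by
  haveI := probF hN (1 - i)
  have h1 : F (1 - i) (Iic (B i)) = 1 := by
    refine le_antisymm prob_le_one ?_
    calc (1 : ENNReal) = F (1 - i) (Icc 0 (B (1 - i))) := ((hN.1 (1 - i)).2).symm
      _ ≤ F (1 - i) (Iic (B i)) := measure_mono (by rw [hBB]; exact fun y hy => hy.2)
  rw [← Iic_split hN (1 - i) (B i), h1]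
  simp

lemma atom_of_supp_singleton (i : Fin 2) {c : ℝ} (h : supp (F i) = {c}) :
    F i {c} ≠ 0 := by
  haveI := probF hN i
  intro h0
  have hc : F i ({c} : Set ℝ)ᶜ = 0 := by
    rw [← h]
    exact measure_compl_supp (F i)
  have hle : F i univ ≤ F i {c} + F i ({c} : Set ℝ)ᶜ := by
    rw [← union_compl_self ({c} : Set ℝ)]
    exact measure_union_le _ _
  rw [h0, hc, measure_univ] at hle
  simp at hle

omit hN in
lemma one_sub_one_sub (a : Fin 2) : 1 - (1 - a) = a := by revert a; decide

omit hN in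
lemma fin2_cases (j : Fin 2) : j = 0 ∨ j = 1 := by revert j; decide

lemma case1 (hB : ∀ j, 0 ≤ B j) (hv : ∀ j, 0 < v j) (hBB : B 0 = B 1)
    (hlt : B 1 < 1 / 2 * min (v 0) (v 1)) : ∀ i, tval F i = B i := by
  have hBc : ∀ j k : Fin 2, B j = B k := by
    intro j k; fin_cases j <;> fin_cases k <;> simp [hBB]
  have hvmin : ∀ i : Fin 2, min (v 0) (v 1) ≤ v i := by
    intro i; fin_cases i
    · exact min_le_left _ _
    · exact min_le_right _ _
  have hBv : ∀ i : Fin 2, B i < v i := by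
    intro i
    have h2 := hBc i 1
    have := hvmin i
    nlinarith [hv i]
  have hBhalf : ∀ i : Fin 2, B i < v i / 2 := by
    intro i
    have h2 := hBc i 1
    have := hvmin i
    linarith
  have hmin : ∀ i : Fin 2, min (B (1 - i)) (v (1 - i)) = min (B i) (v i) := by
    intro i
    rw [min_eq_left (hBv (1 - i)).le, min_eq_left (hBv i).le]
    exact hBc (1 - i) i
  have upos : ∀ i, 0 < uval B v F i := by
    intro i
    have hmem : B i ∈ Icc 0 (B i) := ⟨hB i, le_refl _⟩
    have h1 := Uf_le hN hmem
    have h2 := top_mass hN i (hBc (1 - i) i)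
    have hcoin : winProb B v i (B i) (B i) = 1 / 2 := winProb_diag_coin (hmin i)
    have hβ : 0 ≤ (F (1 - i) (Iio (B i))).toReal := ENNReal.toReal_nonneg
    have hUf : v i / 2 - B i ≤ Uf B v F i (B i) := by
      unfold Uf Wf
      rw [hcoin]
      nlinarith [hv i]
    have := hBhalf i
    linarith
  have hteq : tval F 0 = tval F 1 := by
    have hnot : ∀ a : Fin 2, ¬ tval F a < tval F (1 - a) := by
      intro a hgap
      have := (L_lowgap hN a (hv a) (hB a) hgap).1
      exact absurd this (ne_of_gt (upos a))
    have h0 := hnot 0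
    have h1 := hnot 1
    rw [(rfl : (1 : Fin 2) - 0 = 1)] at h0
    rw [(rfl : (1 : Fin 2) - 1 = 0)] at h1
    rcases lt_trichotomy (tval F 0) (tval F 1) with h | h | h
    · exact absurd h h0
    · exact h
    · exact absurd h h1
  intro i
  by_contra hne
  have htlt : tval F i < B i := lt_of_le_of_ne (t_mem_Icc hN i).2 hne
  have htall : ∀ j : Fin 2, tval F j = tval F i := by
    intro j; fin_cases j <;> fin_cases i <;> simp [hteq]
  set t := tval F i with htdef
  have ht0 : 0 ≤ t := (t_mem_Icc hN i).1
  have hatom : ∀ j : Fin 2, F (1 - j) {t} ≠ 0 := by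
    intro j
    have hle : tval F j ≤ tval F (1 - j) := by rw [htall j, htall (1 - j)]
    have h1 := L_bot' hN j (hv j) hle
    rw [htall j] at h1
    intro h0
    rw [h0] at h1
    simp only [ENNReal.toReal_zero, mul_zero, zero_sub] at h1
    have := upos j
    linarith
  have hF1 : F 1 {t} ≠ 0 := by
    have := hatom 0; rwa [(rfl : (1 : Fin 2) - 0 = 1)] at this
  have hF0 : F 0 {t} ≠ 0 := by
    have := hatom 1; rwa [(rfl : (1 : Fin 2) - 1 = 0)] at this
  exact L_noDouble hN hv hF0 hF1 ht0 ((hBc 0 i) ▸ htlt) ((hBc 1 i) ▸ htlt)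

lemma L_gap (hv : ∀ j, 0 < v j) (hB : ∀ j, 0 ≤ B j) (a : Fin 2)
    (hgap : tval F a < tval F (1 - a)) :
    tval F a = 0 ∧ uval B v F a = 0 ∧ F a {0} ≠ 0 ∧
    F a (Iio (tval F (1 - a))) = F a {0} ∧
    v (1 - a) * (F a {0}).toReal ≤ uval B v F (1 - a) ∧
    F a {tval F (1 - a)} ≠ 0 ∧ F (1 - a) {tval F (1 - a)} ≠ 0 ∧
    tval F (1 - a) = B (1 - a) := by
  haveI := probF hN a
  haveI := probF hN (1 - a)
  have e : 1 - (1 - a) = a := one_sub_one_sub a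
  obtain ⟨hu0, hta, hatom0, hIoo⟩ := L_lowgap hN a (hv a) (hB a) hgap
  set tb := tval F (1 - a) with htbdef
  have htb0 : 0 < tb := by rw [hta] at hgap; exact hgap
  have hIio0 : F a (Iio (0 : ℝ)) = 0 :=
    measure_mono_null (fun y hy => mem_compl fun h' => (not_le.2 hy) h'.1)
      (Icc_compl_null hN a)
  have hIioEq : F a (Iio tb) = F a {0} := by
    apply le_antisymm
    · calc F a (Iio tb) ≤ F a (({0} : Set ℝ) ∪ (Ioo 0 tb ∪ Iio 0)) := by
            apply measure_mono
            intro y hy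
            rcases lt_trichotomy y 0 with h | h | h
            · exact mem_union_right _ (mem_union_right _ h)
            · exact mem_union_left _ (by simp [h])
            · exact mem_union_right _ (mem_union_left _ ⟨h, hy⟩)
        _ ≤ F a {0} + F a (Ioo 0 tb ∪ Iio 0) := measure_union_le _ _
        _ = F a {0} := by rw [measure_union_null hIoo hIio0, add_zero]
    · exact measure_mono (singleton_subset_iff.2 htb0)
  set α := (F a {0}).toReal with hαdef
  have hαpos : 0 < α := mass_pos hN hatom0
  have hstep1 : v (1 - a) * α ≤ uval B v F (1 - a) := by
    apply le_of_forall_pos_le_add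
    intro ε hε
    set x := min ε (tb / 2) with hxdef
    have hx0 : 0 < x := lt_min hε (by linarith)
    have hxtb : x < tb := lt_of_le_of_lt (min_le_right _ _) (by linarith)
    have hxB : x ≤ B (1 - a) := le_trans hxtb.le (t_mem_Icc hN (1 - a)).2
    have h1 := Uf_le hN (i := 1 - a) (x := x) ⟨hx0.le, hxB⟩
    have h2 : α ≤ (F (1 - (1 - a)) (Iio x)).toReal := by
      rw [e]
      exact ENNReal.toReal_mono (measure_ne_top _ _)
        (measure_mono (singleton_subset_iff.2 hx0))
    have h3 := Wf_ge_Iio (F := F) (B := B) (v := v) (1 - a) x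
    have h4 : v (1 - a) * α - x ≤ Uf B v F (1 - a) x := by
      have := mul_le_mul_of_nonneg_left (h2.trans h3) (hv (1 - a)).le
      unfold Uf
      linarith
    have h5 : x ≤ ε := min_le_left _ _
    linarith
  have hbot := L_bot hN (1 - a) (hv (1 - a))
  rw [e, ← htbdef, Iic_split hN a tb, hIioEq, ← hαdef] at hbot
  have hτatom : F a {tb} ≠ 0 := by
    intro h0
    rw [h0] at hbot
    simp only [ENNReal.toReal_zero, add_zero] at hbot
    linarith
  have hUfa : Uf B v F a tb = 0 := by rw [atom_opt hN hτatom, hu0]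
  have hIiob : F (1 - a) (Iio tb) = 0 := Iio_t_null hN (1 - a)
  have hExp : Uf B v F a tb =
      v a * (winProb B v a tb tb * (F (1 - a) {tb}).toReal) - tb := by
    unfold Uf Wf
    rw [hIiob]
    simp
  have hEq : v a * (winProb B v a tb tb * (F (1 - a) {tb}).toReal) = tb := by
    rw [hExp] at hUfa
    linarith
  have hcκ : 0 < winProb B v a tb tb * (F (1 - a) {tb}).toReal := by
    by_contra hle
    push_neg at hle
    nlinarith [hv a]
  have hcapos : 0 < winProb B v a tb tb := by
    by_contra hc
    push_neg at hc
    nlinarith [ENNReal.toReal_nonneg (a := F (1 - a) {tb})]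
  have hκatom : F (1 - a) {tb} ≠ 0 := by
    intro h0
    rw [h0] at hcκ
    simp at hcκ
  have htbB : tb = B (1 - a) := by
    by_contra hne
    have hlt : tb < B (1 - a) := lt_of_le_of_ne (t_mem_Icc hN (1 - a)).2 hne
    have htie := L_tie hN (i := 1 - a) (hv (1 - a)) hκatom (by rw [e]; exact hτatom)
      htb0.le hlt
    rw [e] at htie
    have hc0 : winProb B v a tb tb = 0 := winProb_diag_of_gt htie.1 htie.2
    rw [hc0] at hcapos
    exact lt_irrefl _ hcapos
  exact ⟨hta, hu0, hatom0, hIioEq, hstep1, hτatom, hκatom, htbB⟩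

lemma case3 (hv : ∀ j, 0 < v j) (hB : ∀ j, 0 ≤ B j) (hBne : B 0 ≠ B 1) :
    ∀ i, tval F i = 0 := by
  have hgapF : ∀ a : Fin 2, ¬ tval F a < tval F (1 - a) := by
    intro a hgap
    have e : 1 - (1 - a) = a := one_sub_one_sub a
    obtain ⟨hta, hu0, hatom0, hIioEq, hstep1, hτatom, hκatom, htbB⟩ :=
      L_gap hN hv hB a hgap
    set tb := tval F (1 - a) with htbdef
    have htb0 : 0 < tb := by rw [hta] at hgap; exact hgap
    have htbBa : tb ≤ B a := (supp_sub hN a (mem_supp_of_singleton hτatom)).2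
    rcases lt_or_eq_of_le htbBa with hlt | heq
    · have htie := L_tie hN (i := a) (hv a) hτatom hκatom htb0.le hlt
      have hc0 : winProb B v (1 - a) tb tb = 0 := by
        apply winProb_diag_of_gt htie.1
        rw [e]
        exact htie.2
      have hUb : uval B v F (1 - a) = v (1 - a) * (F a {0}).toReal - tb := by
        rw [← atom_opt hN hκatom]
        unfold Uf Wf
        rw [e, hc0, hIioEq]
        ring
      rw [hUb] at hstep1
      linarith
    · have hBa : B a = B (1 - a) := by rw [← heq, htbB]
      have hB01 : B 0 = B 1 := by
        rcases fin2_cases a with rfl | rfl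
        · exact hBa
        · exact hBa.symm
      exact hBne hB01
  have hteq : tval F 0 = tval F 1 := by
    have h0 := hgapF 0
    have h1 := hgapF 1
    rw [(rfl : (1 : Fin 2) - 0 = 1)] at h0
    rw [(rfl : (1 : Fin 2) - 1 = 0)] at h1
    rcases lt_trichotomy (tval F 0) (tval F 1) with h | h | h
    · exact absurd h h0
    · exact h
    · exact absurd h h1
  have hmain : tval F 0 = 0 := by
    by_contra hne
    have ht0 : 0 < tval F 0 := lt_of_le_of_ne (t_mem_Icc hN 0).1 (Ne.symm hne)
    have htall : ∀ j : Fin 2, tval F j = tval F 0 := by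
      intro j
      rcases fin2_cases j with rfl | rfl
      · rfl
      · exact hteq.symm
    have hatom : ∀ j : Fin 2, F (1 - j) {tval F 0} ≠ 0 := by
      intro j
      have hle : tval F j ≤ tval F (1 - j) := by rw [htall j, htall (1 - j)]
      have h1 := L_bot' hN j (hv j) hle
      rw [htall j] at h1
      intro h0
      rw [h0] at h1
      simp only [ENNReal.toReal_zero, mul_zero, zero_sub] at h1
      have := u_nonneg hN j (hv j) (hB j)
      linarith
    have hex : tval F 0 < B 0 ∨ tval F 0 < B 1 := by
      by_contra hcon
      push_neg at hcon
      have h1 : B 0 = tval F 0 := le_antisymm hcon.1 (t_mem_Icc hN 0).2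
      have h2 : B 1 = tval F 0 := le_antisymm hcon.2 (by rw [← htall 1]; exact (t_mem_Icc hN 1).2)
      exact hBne (h1.trans h2.symm)
    have hcontra : ∀ j : Fin 2, tval F 0 < B j → False := by
      intro j hltj
      have e : 1 - (1 - j) = j := one_sub_one_sub j
      have hFj : F j {tval F 0} ≠ 0 := by
        have := hatom (1 - j); rwa [e] at this
      have htie := L_tie hN (i := j) (hv j) hFj (hatom j) ht0.le hltj
      have hc0 : winProb B v (1 - j) (tval F 0) (tval F 0) = 0 := by
        apply winProb_diag_of_gt htie.1
        rw [e]
        exact htie.2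
      have hIioj : F j (Iio (tval F 0)) = 0 := by
        have := Iio_t_null hN j
        rwa [htall j] at this
      have hUb : uval B v F (1 - j) = -(tval F 0) := by
        rw [← atom_opt hN (hatom j)]
        unfold Uf Wf
        rw [e, hc0, hIioj]
        simp
      have := u_nonneg hN (1 - j) (hv (1 - j)) (hB (1 - j))
      linarith
    rcases hex with h | h
    · exact hcontra 0 h
    · exact hcontra 1 h
  intro i
  rcases fin2_cases i with rfl | rfl
  · exact hmain
  · rw [← hteq]
    exact hmain


lemma case2 (hv : ∀ j, 0 < v j) (hB : ∀ j, 0 ≤ B j) (hBB : B 0 = B 1)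
    (heq2 : B 1 = 1 / 2 * min (v 0) (v 1)) :
    (∀ k, sInf (supp (F k)) = sSup (supp (F k))) ∨
    ∃ a : Fin 2, sInf (supp (F a)) = 0 ∧ v (1 - a) ≠ min (v 0) (v 1) ∧
      sInf (supp (F (1 - a))) = sSup (supp (F (1 - a))) := by
  have hvmin0 : 0 < min (v 0) (v 1) := lt_min (hv 0) (hv 1)
  have hBc : ∀ j k : Fin 2, B j = B k := by
    intro j k; fin_cases j <;> fin_cases k <;> simp [hBB]
  have hvmin : ∀ i : Fin 2, min (v 0) (v 1) ≤ v i := by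
    intro i; fin_cases i
    · exact min_le_left _ _
    · exact min_le_right _ _
  have hBhalf : ∀ i : Fin 2, B i = 1 / 2 * min (v 0) (v 1) := by
    intro i; rw [hBc i 1, heq2]
  have hBpos : ∀ i : Fin 2, 0 < B i := by
    intro i; rw [hBhalf i]; linarith
  have hBv : ∀ i : Fin 2, B i < v i := by
    intro i
    have := hvmin i
    have := hBhalf i
    linarith
  have hv2 : ∀ i : Fin 2, 2 * B i ≤ v i := by
    intro i
    have := hvmin i
    have := hBhalf i
    linarith
  have hmin : ∀ i : Fin 2, min (B (1 - i)) (v (1 - i)) = min (B i) (v i) := by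
    intro i
    rw [min_eq_left (hBv (1 - i)).le, min_eq_left (hBv i).le]
    exact hBc (1 - i) i
  have hgapcase : ∀ a : Fin 2, tval F a < tval F (1 - a) →
      sInf (supp (F a)) = 0 ∧ v (1 - a) ≠ min (v 0) (v 1) ∧
      sInf (supp (F (1 - a))) = sSup (supp (F (1 - a))) := by
    intro a hgap
    have e : 1 - (1 - a) = a := one_sub_one_sub a
    obtain ⟨hta, hu0, hatom0, hIioEq, hstep1, hτatom, hκatom, htbB⟩ :=
      L_gap hN hv hB a hgap
    refine ⟨hta, ?_, degenerate_of hN (1 - a) htbB⟩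
    intro hveq
    have hsupp1 : supp (F (1 - a)) = {B (1 - a)} :=
      supp_eq_singleton hN (1 - a) htbB
    have hatomB : F (1 - a) {B (1 - a)} ≠ 0 := atom_of_supp_singleton hN (1 - a) hsupp1
    have hUb := atom_opt hN hatomB
    have hcoinB : winProb B v (1 - a) (B (1 - a)) (B (1 - a)) = 1 / 2 :=
      winProb_diag_coin (hmin (1 - a))
    have hγ : F a (Iio (B (1 - a))) = F a {0} := by rw [← htbB]; exact hIioEq
    have htop := top_mass hN (1 - a) (hBc (1 - (1 - a)) (1 - a))
    rw [e, hγ] at htop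
    have hm : (F a {B (1 - a)}).toReal = 1 - (F a {0}).toReal := by linarith
    have hUcomp : uval B v F (1 - a) =
        v (1 - a) * ((F a {0}).toReal + 1 / 2 * (1 - (F a {0}).toReal)) - B (1 - a) := by
      rw [← hUb]
      unfold Uf Wf
      rw [e, hcoinB, hγ, hm]
    have hvB : v (1 - a) = 2 * B (1 - a) := by
      rw [hveq, hBhalf (1 - a)]; ring
    have hαpos : 0 < (F a {0}).toReal := mass_pos hN hatom0
    rw [hUcomp] at hstep1
    nlinarith [mul_pos (hBpos (1 - a)) hαpos]
  have hmaineq : tval F 0 = tval F 1 →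
      ∀ k, sInf (supp (F k)) = sSup (supp (F k)) := by
    intro hteq
    have hclaim : ∀ k, tval F k = B k := by
      by_contra hcon
      push_neg at hcon
      obtain ⟨k, hk⟩ := hcon
      have htlt : tval F k < B k := lt_of_le_of_ne (t_mem_Icc hN k).2 hk
      have htall : ∀ j : Fin 2, tval F j = tval F k := by
        intro j
        rcases fin2_cases j with rfl | rfl <;> rcases fin2_cases k with rfl | rfl
        · rfl
        · exact hteq
        · exact hteq.symm
        · rfl
      have ht0le : 0 ≤ tval F k := (t_mem_Icc hN k).1
      rcases lt_or_eq_of_le ht0le with htpos | ht0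
      · have hatom : ∀ j : Fin 2, F (1 - j) {tval F k} ≠ 0 := by
          intro j
          have hle : tval F j ≤ tval F (1 - j) := by rw [htall j, htall (1 - j)]
          have h1 := L_bot' hN j (hv j) hle
          rw [htall j] at h1
          intro h0
          rw [h0] at h1
          simp only [ENNReal.toReal_zero, mul_zero, zero_sub] at h1
          have := u_nonneg hN j (hv j) (hB j)
          linarith
        have hF1 : F 1 {tval F k} ≠ 0 := by
          have := hatom 0; rwa [(rfl : (1 : Fin 2) - 0 = 1)] at this
        have hF0 : F 0 {tval F k} ≠ 0 := by
          have := hatom 1; rwa [(rfl : (1 : Fin 2) - 1 = 0)] at this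
        exact L_noDouble hN hv hF0 hF1 ht0le ((hBc 0 k) ▸ htlt) ((hBc 1 k) ▸ htlt)
      · have hfin : ∀ i : Fin 2, uval B v F i = 0 → False := by
          intro i hui
          have hmem : B i ∈ Icc 0 (B i) := ⟨hB i, le_refl _⟩
          have h1 := Uf_le hN hmem
          rw [hui] at h1
          have htopi := top_mass hN i (hBc (1 - i) i)
          have hcoin : winProb B v i (B i) (B i) = 1 / 2 := winProb_diag_coin (hmin i)
          have hβnn : 0 ≤ (F (1 - i) (Iio (B i))).toReal := ENNReal.toReal_nonneg
          have hβ0 : (F (1 - i) (Iio (B i))).toReal ≤ 0 := by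
            unfold Uf Wf at h1
            rw [hcoin] at h1
            have hmi : (F (1 - i) {B i}).toReal =
                1 - (F (1 - i) (Iio (B i))).toReal := by linarith
            rw [hmi] at h1
            by_contra hβc
            push_neg at hβc
            nlinarith [hv2 i, mul_pos (hv i) hβc]
          have hβeq : F (1 - i) (Iio (B i)) = 0 := by
            have hz : (F (1 - i) (Iio (B i))).toReal = 0 := le_antisymm hβ0 hβnn
            haveI := probF hN (1 - i)
            exact ((ENNReal.toReal_eq_zero_iff _).1 hz).resolve_right (measure_ne_top _ _)
          have h0supp : (0 : ℝ) ∈ supp (F (1 - i)) := by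
            rw [ht0, ← htall (1 - i)]
            exact t_mem hN (1 - i)
          exact h0supp (Iio (B i)) (Iio_mem_nhds (hBpos i)) hβeq
        by_cases hz : F 0 {(0 : ℝ)} = 0 ∧ F 1 {(0 : ℝ)} = 0
        · apply hfin 0
          have hle0 : tval F 0 ≤ tval F (1 - 0) := le_of_eq hteq
          have h1 := L_bot' hN 0 (hv 0) hle0
          have h1' : uval B v F 0 ≤ v 0 * ((F 1) {tval F 0}).toReal - tval F 0 := h1
          rw [htall 0, ← ht0, hz.2] at h1'
          simp only [ENNReal.toReal_zero, mul_zero, zero_sub, neg_zero] at h1'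
          have := u_nonneg hN 0 (hv 0) (hB 0)
          linarith
        · rw [not_and_or] at hz
          have hex : ∃ j : Fin 2, F j {(0 : ℝ)} ≠ 0 := by
            rcases hz with h | h
            exacts [⟨0, h⟩, ⟨1, h⟩]
          obtain ⟨j, hj⟩ := hex
          apply hfin j
          have hU0 := atom_opt hN hj
          have hIio0 : F (1 - j) (Iio (0 : ℝ)) = 0 :=
            measure_mono_null (fun y hy => mem_compl fun h' => (not_le.2 hy) h'.1)
              (Icc_compl_null hN (1 - j))
          have hcoin0 : winProb B v j 0 0 = 1 / 2 := winProb_diag_coin (hmin j)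
          have hUeq : uval B v F j = v j * (1 / 2 * (F (1 - j) {(0:ℝ)}).toReal) := by
            rw [← hU0]
            unfold Uf Wf
            rw [hIio0, hcoin0]
            simp
          have hup := L_up hN j (hv j) (le_refl (0:ℝ)) (hBpos j)
          rw [Iic_split hN (1 - j) 0, hIio0] at hup
          simp only [ENNReal.toReal_zero, zero_add, sub_zero] at hup
          rw [hUeq] at hup
          have hznn : 0 ≤ (F (1 - j) {(0:ℝ)}).toReal := ENNReal.toReal_nonneg
          have hzle : (F (1 - j) {(0:ℝ)}).toReal ≤ 0 := by
            by_contra hc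
            push_neg at hc
            nlinarith [mul_pos (hv j) hc]
          have hz0 : (F (1 - j) {(0:ℝ)}).toReal = 0 := le_antisymm hzle hznn
          rw [hUeq, hz0]
          ring
    intro k
    exact degenerate_of hN k (hclaim k)
  rcases lt_trichotomy (tval F 0) (tval F 1) with h | h | h
  · exact Or.inr ⟨0, hgapcase 0 h⟩
  · exact Or.inl (hmaineq h)
  · exact Or.inr ⟨1, hgapcase 1 h⟩

end withNash

lemma fin2_eq_or (i a : Fin 2) : i = a ∨ i = 1 - a := by revert i a; decide

end APA

/-- Structure of the supports in any Nash equilibrium: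
(1) if `B₁ = B₂ < (1/2)·min {v₁, v₂}` then both supports are degenerate;
(2) if `B₁ = B₂ = (1/2)·min {v₁, v₂}` and `i` is a player with the smaller valuation,
then either both supports are degenerate, or `i`'s support has infimum `0` while the
opponent's support is degenerate;
(3) if `B₁ ≠ B₂` then both supports have infimum `0`. -/
theorem support_structure (B v : Fin 2 → ℝ) (hB : ∀ i, 0 ≤ B i) (hv : ∀ i, 0 < v i)
    (F : Fin 2 → Measure ℝ) (hN : IsNash B v F) :
    (B 0 = B 1 ∧ B 1 < 1 / 2 * min (v 0) (v 1) →
      ∀ i, sInf (supp (F i)) = sSup (supp (F i))) ∧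
    (∀ i : Fin 2, B 0 = B 1 → B 1 = 1 / 2 * min (v 0) (v 1) →
      v i = min (v 0) (v 1) →
      ((∀ k, sInf (supp (F k)) = sSup (supp (F k))) ∨
        (sInf (supp (F i)) = 0 ∧
          sInf (supp (F (1 - i))) = sSup (supp (F (1 - i)))))) ∧
    (B 0 ≠ B 1 → ∀ i, sInf (supp (F i)) = 0) := by
  refine ⟨?_, ?_, ?_⟩
  · rintro ⟨hBB, hlt⟩ i
    exact APA.degenerate_of hN i (APA.case1 hN hB hv hBB hlt i)
  · intro i hBB heq2 hvi
    rcases APA.case2 hN hv hB hBB heq2 with h | ⟨a, h1, h2, h3⟩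
    · exact Or.inl h
    · rcases APA.fin2_eq_or i a with rfl | rfl
      · exact Or.inr ⟨h1, h3⟩
      · exact absurd hvi h2
  · intro hBne i
    exact APA.case3 hN hv hB hBne i
end
end
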